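/- If T is a tree with at least one edge, then any inclusion i : K_2 ↪ T of an edge induces a homotopy equivalence i_{K_n} : Hom(T, K_n) → Hom(K_2, K_n). -/

import Mathlib

open scoped Topology

/-- A cell of the Lovász `Hom` complex of multihomomorphisms between two graphs,
given by adjacency relations `A` and `B`: a function assigning to each vertex a
nonempty set of vertices such that adjacent vertices get completely adjacent sets. -/
@[ext]
structure HomCell {V W : Type*} (A : V → V → Prop) (B : W → W → Prop) where
  η : V → Set W
  nonempty : ∀ v, (η v).Nonempty
  adj : ∀ ⦃x y⦄, A x y → ∀ a ∈ η x, ∀ b ∈ η y, B a b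

namespace HomCell

variable {U V W : Type*} {A : V → V → Prop} {B : W → W → Prop}

theorem eta_injective : Function.Injective (HomCell.η (A := A) (B := B)) := by
  rintro ⟨f, _, _⟩ ⟨g, _, _⟩ h
  simpa using h

/-- Cells are ordered by pointwise inclusion (the face order of the `Hom` complex). -/
instance : PartialOrder (HomCell A B) := PartialOrder.lift HomCell.η eta_injective

theorem le_def {c d : HomCell A B} : c ≤ d ↔ ∀ v, c.η v ⊆ d.η v := Iff.rfl

noncomputable instance [Finite V] [Finite W] : Fintype (HomCell A B) := by
  classical
  have : Finite (HomCell A B) := Finite.of_injective _ (eta_injective (A := A) (B := B))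
  exact Fintype.ofFinite _

noncomputable instance : DecidableEq (HomCell A B) := Classical.decEq _

/-- Precomposition with a graph homomorphism `φ : (U,A') → (V,A)`: the induced
cellular (monotone) map `Hom(V,W) → Hom(U,W)`; this is the contravariant functoriality
of `Hom(-,H)`. -/
def pull {A' : U → U → Prop} (φ : U → V) (hφ : ∀ ⦃x y⦄, A' x y → A (φ x) (φ y)) :
    HomCell A B →o HomCell A' B where
  toFun c :=
    { η := fun u => c.η (φ u)
      nonempty := fun u => c.nonempty (φ u)
      adj := fun _ _ hxy => c.adj (hφ hxy) }
  monotone' := fun _ _ h u => h (φ u)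

/-- Postcomposition with a graph homomorphism `φ : (V,B) → (W,B')`: the induced
cellular (monotone) map `Hom(U,V) → Hom(U,W)`; this is the covariant functoriality
of `Hom(G,-)`. -/
def push {U₀ V₀ W₀ : Type*} {A₀ : U₀ → U₀ → Prop} {B₀ : V₀ → V₀ → Prop}
    {B₀' : W₀ → W₀ → Prop} (φ : V₀ → W₀)
    (hφ : ∀ ⦃x y⦄, B₀ x y → B₀' (φ x) (φ y)) (c : HomCell A₀ B₀) : HomCell A₀ B₀' where
  η v := φ '' c.η v
  nonempty v := (c.nonempty v).image φ
  adj := by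
    rintro x y hxy a ⟨a', ha', rfl⟩ b ⟨b', hb', rfl⟩
    exact hφ (c.adj hxy a' ha' b' hb')

end HomCell

/-- The geometric realization of the order complex of a preorder `P`:
formal convex combinations supported on finite chains of `P`. -/
def OrderComplex (P : Type*) [Preorder P] : Type _ :=
  { f : P → ℝ // (∀ x, 0 ≤ f x) ∧ HasSum f 1 ∧ IsChain (· ≤ ·) {x | f x ≠ 0} }

instance (P : Type*) [Preorder P] : TopologicalSpace (OrderComplex P) :=
  instTopologicalSpaceSubtype

/-- The topological space underlying the Lovász complex `Hom(G,H)` for graphs given by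
adjacency relations `A`, `B`: the (realization of the) poset of multihomomorphism cells. -/
def HomComplex {V W : Type*} (A : V → V → Prop) (B : W → W → Prop) : Type _ :=
  OrderComplex (HomCell A B)

instance {V W : Type*} (A : V → V → Prop) (B : W → W → Prop) :
    TopologicalSpace (HomComplex A B) := instTopologicalSpaceSubtype

/-- The simplicial map on order complexes induced by a monotone map of posets:
barycentric pushforward of weights. -/
noncomputable def OrderHom.realize {P Q : Type*} [Preorder P] [Preorder Q] [Fintype P]
    [DecidableEq Q] (φ : P →o Q) : C(OrderComplex P, OrderComplex Q) where
  toFun x := by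
    refine ⟨fun q => ∑ p ∈ Finset.univ.filter (fun p => φ p = q), x.1 p, ?_, ?_, ?_⟩
    · intro q
      exact Finset.sum_nonneg fun p _ => x.2.1 p
    · have h1 : ∑ p, x.1 p = 1 := (hasSum_fintype x.1).unique x.2.2.1
      have key : ∀ q ∉ Finset.univ.image φ,
          (∑ p ∈ Finset.univ.filter (fun p => φ p = q), x.1 p) = 0 := by
        intro q hq
        apply Finset.sum_eq_zero
        intro p hp
        simp only [Finset.mem_filter] at hp
        exact absurd (Finset.mem_image.mpr ⟨p, Finset.mem_univ p, hp.2⟩) hq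
      have := hasSum_sum_of_ne_finset_zero (s := Finset.univ.image φ)
        (f := fun q => ∑ p ∈ Finset.univ.filter (fun p => φ p = q), x.1 p) (L := SummationFilter.unconditional _) key
      have h2 : (∑ q ∈ Finset.univ.image φ,
          ∑ p ∈ Finset.univ.filter (fun p => φ p = q), x.1 p) = ∑ p, x.1 p :=
        Finset.sum_fiberwise_of_maps_to
          (fun p _ => Finset.mem_image_of_mem φ (Finset.mem_univ p)) _
      rwa [h2, h1] at this
    · intro q1 hq1 q2 hq2 hne
      simp only [Set.mem_setOf_eq] at hq1 hq2
      obtain ⟨p1, hp1, hxp1⟩ : ∃ p, φ p = q1 ∧ x.1 p ≠ 0 := by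
        by_contra h
        push_neg at h
        exact hq1 (Finset.sum_eq_zero fun p hp => by
          simp only [Finset.mem_filter] at hp
          exact h p hp.2)
      obtain ⟨p2, hp2, hxp2⟩ : ∃ p, φ p = q2 ∧ x.1 p ≠ 0 := by
        by_contra h
        push_neg at h
        exact hq2 (Finset.sum_eq_zero fun p hp => by
          simp only [Finset.mem_filter] at hp
          exact h p hp.2)
      have hp12 : p1 ≠ p2 := fun h => hne (hp1 ▸ hp2 ▸ h ▸ rfl)
      rcases x.2.2.2 hxp1 hxp2 hp12 with h | h
      · exact Or.inl (hp1 ▸ hp2 ▸ φ.monotone h)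
      · exact Or.inr (hp2 ▸ hp1 ▸ φ.monotone h)
  continuous_toFun := by
    apply Continuous.subtype_mk
    apply continuous_pi
    intro q
    exact continuous_finset_sum _ fun p _ => (continuous_apply p).comp continuous_subtype_val

section RealizeLemmas

open Finset

variable {P Q : Type*} [Preorder P] [Preorder Q] [Fintype P] [DecidableEq Q]

theorem realize_apply (φ : P →o Q) (x : OrderComplex P) (q : Q) :
    (φ.realize x).1 q = ∑ p ∈ Finset.univ.filter (fun p => φ p = q), x.1 p := rfl

theorem realize_id [DecidableEq P] : (OrderHom.id : P →o P).realize = ContinuousMap.id (OrderComplex P) := by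
  refine ContinuousMap.ext fun x => Subtype.ext (funext fun q => ?_)
  rw [realize_apply]
  rw [show Finset.univ.filter (fun p => OrderHom.id p = q) = {q} by ext p; simp]
  simp [ContinuousMap.id_apply]

theorem realize_comp {R : Type*} [Preorder R] [Fintype Q] [DecidableEq R]
    (φ : Q →o R) (ψ : P →o Q) :
    (φ.comp ψ).realize = φ.realize.comp ψ.realize := by
  refine ContinuousMap.ext fun x => Subtype.ext (funext fun r => ?_)
  rw [ContinuousMap.comp_apply, realize_apply, realize_apply]
  have h2 : ∀ q ∈ Finset.univ.filter (fun q => φ q = r),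
      (ψ.realize x).1 q = ∑ p ∈ Finset.univ.filter (fun p => ψ p = q), x.1 p :=
    fun q _ => realize_apply ψ x q
  rw [Finset.sum_congr rfl h2]
  rw [Finset.sum_fiberwise_eq_sum_filter Finset.univ
      (Finset.univ.filter fun q => φ q = r) ψ x.1]
  apply Finset.sum_congr
  · ext p; simp [OrderHom.comp_coe]
  · intro _ _; rfl

end RealizeLemmas
section OrderHomotopy

open Finset
open scoped Classical

variable {P Q : Type*} [Preorder P] [Fintype P]

/-- Total weight of elements strictly above `p`. -/
noncomputable def chainGap (x : OrderComplex P) (p : P) : ℝ :=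
  ∑ r ∈ Finset.univ.filter (fun r => p < r), x.1 r

lemma chainGap_nonneg (x : OrderComplex P) (p : P) : 0 ≤ chainGap x p :=
  Finset.sum_nonneg fun r _ => x.2.1 r

omit [Fintype P] in
lemma ocSum [Fintype P] (x : OrderComplex P) : ∑ p, x.1 p = 1 :=
  (hasSum_fintype x.1).unique x.2.2.1

lemma insert_chainGap (x : OrderComplex P) (p : P) :
    ∑ r ∈ insert p (Finset.univ.filter (fun r => p < r)), x.1 r
      = x.1 p + chainGap x p := by
  rw [Finset.sum_insert (by simp)]
  rfl

lemma add_chainGap_le_one (x : OrderComplex P) (p : P) : x.1 p + chainGap x p ≤ 1 := by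
  rw [← insert_chainGap]
  calc ∑ r ∈ insert p (Finset.univ.filter (fun r => p < r)), x.1 r
      ≤ ∑ r, x.1 r := Finset.sum_le_sum_of_subset_of_nonneg (Finset.subset_univ _)
        (fun r _ _ => x.2.1 r)
    _ = 1 := ocSum x

lemma chainGap_mono {p₁ p₂ : P} (x : OrderComplex P) (h : p₂ < p₁) :
    x.1 p₁ + chainGap x p₁ ≤ chainGap x p₂ := by
  rw [← insert_chainGap]
  refine Finset.sum_le_sum_of_subset_of_nonneg ?_ (fun r _ _ => x.2.1 r)
  intro r hr
  rcases Finset.mem_insert.mp hr with rfl | hr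
  · exact Finset.mem_filter.mpr ⟨Finset.mem_univ _, h⟩
  · have := (Finset.mem_filter.mp hr).2
    exact Finset.mem_filter.mpr ⟨Finset.mem_univ _, lt_trans h this⟩

/-- The upper weight in the prism homotopy. -/
noncomputable def wUp (t : ℝ) (x : OrderComplex P) (p : P) : ℝ :=
  min (x.1 p) (max 0 (t - chainGap x p))

lemma wUp_nonneg (t : ℝ) (x : OrderComplex P) (p : P) : 0 ≤ wUp t x p :=
  le_min (x.2.1 p) (le_max_left _ _)

lemma wUp_le (t : ℝ) (x : OrderComplex P) (p : P) : wUp t x p ≤ x.1 p :=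
  min_le_left _ _

lemma wUp_support {t : ℝ} {x : OrderComplex P} {p : P} (h : wUp t x p ≠ 0) :
    x.1 p ≠ 0 := by
  intro h0
  exact h (le_antisymm (h0 ▸ wUp_le t x p) (wUp_nonneg t x p))

lemma wLow_support {t : ℝ} {x : OrderComplex P} {p : P} (h : x.1 p - wUp t x p ≠ 0) :
    x.1 p ≠ 0 := by
  intro h0
  apply h
  rw [h0]
  rw [(le_antisymm (h0 ▸ wUp_le t x p) (wUp_nonneg t x p) : wUp t x p = 0)]
  ring

/-- Key exclusion: the lower copy cannot sit strictly above the upper copy. -/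
lemma wKey {t : ℝ} {x : OrderComplex P} {p₁ p₂ : P} (h : p₂ < p₁)
    (h2 : wUp t x p₂ ≠ 0) : x.1 p₁ - wUp t x p₁ = 0 := by
  have hpos : 0 < max 0 (t - chainGap x p₂) := by
    rcases lt_or_ge 0 (max 0 (t - chainGap x p₂)) with h' | h'
    · exact h'
    · exact absurd (le_antisymm (min_le_of_right_le h') (wUp_nonneg t x p₂)) h2
  have ht : chainGap x p₂ < t := by
    rcases max_cases 0 (t - chainGap x p₂) with ⟨he, _⟩ | ⟨he, hle⟩
    · rw [he] at hpos; linarith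
    · rw [he] at hpos; linarith
  have hge : x.1 p₁ + chainGap x p₁ ≤ chainGap x p₂ := chainGap_mono x h
  have h3 : x.1 p₁ ≤ t - chainGap x p₁ := by linarith
  have h4 : wUp t x p₁ = x.1 p₁ :=
    min_eq_left (le_trans h3 (le_max_right _ _))
  rw [h4, sub_self]

end OrderHomotopy
section OrderHomotopy2

open Finset
open scoped Classical

variable {P Q : Type*} [Preorder P] [Preorder Q] [Fintype P] [DecidableEq Q]

/-- The value of the prism homotopy between realizations of comparable monotone maps. -/
noncomputable def mixVal (φ ψ : P →o Q) (t : ℝ) (x : OrderComplex P) (q : Q) : ℝ :=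
  (∑ p ∈ Finset.univ.filter (fun p => φ p = q), (x.1 p - wUp t x p)) +
    ∑ p ∈ Finset.univ.filter (fun p => ψ p = q), wUp t x p

lemma mixVal_mem (φ ψ : P →o Q) (h : ∀ p, φ p ≤ ψ p) (t : ℝ) (x : OrderComplex P) :
    (∀ q, 0 ≤ mixVal φ ψ t x q) ∧ HasSum (mixVal φ ψ t x) 1 ∧
      IsChain (· ≤ ·) {q | mixVal φ ψ t x q ≠ 0} := by
  have hw0 : ∀ p, 0 ≤ x.1 p - wUp t x p := fun p => sub_nonneg.mpr (wUp_le t x p)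
  refine ⟨fun q => add_nonneg (Finset.sum_nonneg fun p _ => hw0 p)
      (Finset.sum_nonneg fun p _ => wUp_nonneg t x p), ?_, ?_⟩
  · have hvanish : ∀ q ∉ (Finset.univ.image φ ∪ Finset.univ.image ψ),
        mixVal φ ψ t x q = 0 := by
      intro q hq
      have hq1 : q ∉ Finset.univ.image φ := fun h' => hq (Finset.mem_union_left _ h')
      have hq2 : q ∉ Finset.univ.image ψ := fun h' => hq (Finset.mem_union_right _ h')
      have e1 : Finset.univ.filter (fun p => φ p = q) = ∅ := by
        rw [Finset.filter_eq_empty_iff]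
        intro p _ hp
        exact hq1 (Finset.mem_image.mpr ⟨p, Finset.mem_univ p, hp⟩)
      have e2 : Finset.univ.filter (fun p => ψ p = q) = ∅ := by
        rw [Finset.filter_eq_empty_iff]
        intro p _ hp
        exact hq2 (Finset.mem_image.mpr ⟨p, Finset.mem_univ p, hp⟩)
      rw [mixVal, e1, e2, Finset.sum_empty, Finset.sum_empty, add_zero]
    have hs := hasSum_sum_of_ne_finset_zero (L := SummationFilter.unconditional _) hvanish
    have htot : ∑ q ∈ (Finset.univ.image φ ∪ Finset.univ.image ψ),
        mixVal φ ψ t x q = 1 := by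
      simp only [mixVal]
      rw [Finset.sum_add_distrib]
      rw [Finset.sum_fiberwise_of_maps_to
        (fun p _ => Finset.mem_union_left _ (Finset.mem_image_of_mem φ (Finset.mem_univ p)))
        (fun p => x.1 p - wUp t x p)]
      rw [Finset.sum_fiberwise_of_maps_to
        (fun p _ => Finset.mem_union_right _ (Finset.mem_image_of_mem ψ (Finset.mem_univ p)))
        (wUp t x)]
      rw [← Finset.sum_add_distrib]
      simp only [sub_add_cancel]
      exact ocSum x
    rwa [htot] at hs
  · intro q1 hq1 q2 hq2 hne
    simp only [Set.mem_setOf_eq] at hq1 hq2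
    have hdec : ∀ q, mixVal φ ψ t x q ≠ 0 →
        (∃ p, φ p = q ∧ x.1 p - wUp t x p ≠ 0) ∨ (∃ p, ψ p = q ∧ wUp t x p ≠ 0) := by
      intro q hq
      by_contra hcon
      push_neg at hcon
      apply hq
      rw [mixVal, Finset.sum_eq_zero, Finset.sum_eq_zero, add_zero]
      · intro p hp; exact hcon.2 p (Finset.mem_filter.mp hp).2
      · intro p hp; exact hcon.1 p (Finset.mem_filter.mp hp).2
    have hcomp : ∀ {p₁ p₂ : P}, x.1 p₁ ≠ 0 → x.1 p₂ ≠ 0 → p₁ ≤ p₂ ∨ p₂ ≤ p₁ := by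
      intro p₁ p₂ h1 h2
      by_cases hpe : p₁ = p₂
      · exact Or.inl (hpe ▸ le_refl p₁)
      · exact x.2.2.2 h1 h2 hpe
    have hmix : ∀ {p₁ p₂ : P}, (x.1 p₁ - wUp t x p₁ ≠ 0) → wUp t x p₂ ≠ 0 →
        φ p₁ ≤ ψ p₂ := by
      intro p₁ p₂ h1 h2
      rcases hcomp (wLow_support h1) (wUp_support h2) with hle | hle
      · exact le_trans (φ.monotone hle) (h p₂)
      · by_cases hle' : p₁ ≤ p₂
        · exact le_trans (φ.monotone hle') (h p₂)
        · exact absurd (wKey (lt_of_le_not_ge hle hle') h2) h1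
    rcases hdec q1 hq1 with ⟨p1, rfl, h1⟩ | ⟨p1, rfl, h1⟩ <;>
      rcases hdec q2 hq2 with ⟨p2, rfl, h2⟩ | ⟨p2, rfl, h2⟩
    · rcases hcomp (wLow_support h1) (wLow_support h2) with hle | hle
      · exact Or.inl (φ.monotone hle)
      · exact Or.inr (φ.monotone hle)
    · exact Or.inl (hmix h1 h2)
    · exact Or.inr (hmix h2 h1)
    · rcases hcomp (wUp_support h1) (wUp_support h2) with hle | hle
      · exact Or.inl (ψ.monotone hle)
      · exact Or.inr (ψ.monotone hle)

/-- The prism homotopy between realizations of comparable monotone maps. -/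
noncomputable def orderHomotopy (φ ψ : P →o Q) (h : ∀ p, φ p ≤ ψ p) :
    ContinuousMap.Homotopy φ.realize ψ.realize where
  toFun z := ⟨mixVal φ ψ (z.1 : ℝ) z.2, mixVal_mem φ ψ h _ z.2⟩
  continuous_toFun := by
    apply Continuous.subtype_mk
    apply continuous_pi
    intro q
    have hx : ∀ p : P, Continuous fun z : ↥unitInterval × OrderComplex P => z.2.1 p :=
      fun p => (continuous_apply p).comp (continuous_subtype_val.comp continuous_snd)
    have ht : Continuous fun z : ↥unitInterval × OrderComplex P => (z.1 : ℝ) :=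
      continuous_subtype_val.comp continuous_fst
    have hcg : ∀ p : P, Continuous
        fun z : ↥unitInterval × OrderComplex P => chainGap z.2 p := by
      intro p
      apply continuous_finset_sum
      intro r _
      exact hx r
    have hw : ∀ p : P, Continuous
        fun z : ↥unitInterval × OrderComplex P => wUp (z.1 : ℝ) z.2 p := by
      intro p
      exact Continuous.min (hx p) (Continuous.max continuous_const (ht.sub (hcg p)))
    exact (continuous_finset_sum _ fun p _ => (hx p).sub (hw p)).add
      (continuous_finset_sum _ fun p _ => hw p)
  map_zero_left x := by
    have hw0 : ∀ p, wUp (((0 : ↥unitInterval) : ℝ)) x p = 0 := by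
      intro p
      have h0 : ((0 : ↥unitInterval) : ℝ) = 0 := rfl
      rw [h0, wUp]
      rw [max_eq_left (by linarith [chainGap_nonneg x p] : (0:ℝ) - chainGap x p ≤ 0)]
      exact min_eq_right (x.2.1 p)
    refine Subtype.ext (funext fun q => ?_)
    show mixVal φ ψ _ x q = _
    rw [realize_apply, mixVal]
    simp only [hw0, sub_zero, Finset.sum_const_zero, add_zero]
  map_one_left x := by
    have hw1 : ∀ p, wUp (((1 : ↥unitInterval) : ℝ)) x p = x.1 p := by
      intro p
      have h1 : ((1 : ↥unitInterval) : ℝ) = 1 := rfl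
      rw [h1, wUp]
      refine min_eq_left (le_trans ?_ (le_max_right _ _))
      have := add_chainGap_le_one x p
      linarith
    refine Subtype.ext (funext fun q => ?_)
    show mixVal φ ψ _ x q = _
    rw [realize_apply, mixVal]
    simp only [hw1, sub_self, Finset.sum_const_zero, zero_add]

theorem realize_homotopic (φ ψ : P →o Q) (h : ∀ p, φ p ≤ ψ p) :
    φ.realize.Homotopic ψ.realize :=
  ⟨orderHomotopy φ ψ h⟩

end OrderHomotopy2
section TreeLemmas

open SimpleGraph

variable {V : Type*} {T : SimpleGraph V}

lemma tree_adj_dist_or (hT : T.IsTree) (a : V) {x y : V} (hxy : T.Adj x y) :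
    T.dist a y = T.dist a x + 1 ∨ T.dist a x = T.dist a y + 1 := by
  classical
  obtain ⟨P, hP, hPl⟩ := hT.isConnected.exists_path_of_dist a x
  by_cases hy : y ∈ P.support
  · right
    have hsplit : (P.takeUntil y hy).length + (P.dropUntil y hy).length = P.length := by
      rw [← Walk.length_append, Walk.take_spec]
    have h1 : T.dist a y ≤ (P.takeUntil y hy).length := SimpleGraph.dist_le _
    have h2 : T.dist y x ≤ (P.dropUntil y hy).length := SimpleGraph.dist_le _
    have h5 : T.dist y x = 1 := SimpleGraph.dist_eq_one_iff_adj.mpr hxy.symm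
    have h4 : T.dist a x ≤ T.dist a y + T.dist y x := hT.isConnected.dist_triangle
    omega
  · left
    have hrev : y ∉ P.reverse.support := by
      rwa [Walk.support_reverse, List.mem_reverse]
    have hQ' : (Walk.cons hxy.symm P.reverse).reverse.IsPath := by
      rw [Walk.isPath_reverse_iff]
      exact (hP.reverse).cons hrev
    obtain ⟨Q, hQ, hQl⟩ := hT.isConnected.exists_path_of_dist a y
    have heq := hT.IsAcyclic.path_unique ⟨_, hQ'⟩ ⟨Q, hQ⟩
    have hlen : (Walk.cons hxy.symm P.reverse).reverse.length = Q.length := by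
      rw [Subtype.ext_iff] at heq
      exact congrArg Walk.length heq
    rw [Walk.length_reverse, Walk.length_cons, Walk.length_reverse] at hlen
    omega

lemma tree_exists_parent (hT : T.IsTree) (r : V) {v : V} (hv : v ≠ r) :
    ∃ w, T.Adj v w ∧ T.dist r w + 1 = T.dist r v := by
  classical
  obtain ⟨P, hP, hPl⟩ := hT.isConnected.exists_path_of_dist r v
  obtain ⟨w, hadj, q, hq⟩ := Walk.exists_eq_cons_of_ne hv P.reverse
  refine ⟨w, hadj, ?_⟩
  have hlen : q.length + 1 = P.length := by
    have h := congrArg Walk.length hq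
    rw [Walk.length_reverse, Walk.length_cons] at h
    omega
  have h1 : T.dist r w ≤ q.length := by
    have h := SimpleGraph.dist_le q
    rwa [SimpleGraph.dist_comm] at h
  have hwv : T.dist w v = 1 := SimpleGraph.dist_eq_one_iff_adj.mpr hadj.symm
  have h2 : T.dist r v ≤ T.dist r w + T.dist w v := hT.isConnected.dist_triangle
  have h3 : T.dist r v ≠ 0 := by
    rw [SimpleGraph.dist_ne_zero_iff_ne_and_reachable]
    exact ⟨(Ne.symm hv), hT.isConnected r v⟩
  omega

lemma tree_parent_unique (hT : T.IsTree) (r : V) {x y y' : V}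
    (hxy : T.Adj x y) (hxy' : T.Adj x y')
    (hy : T.dist r y + 1 = T.dist r x) (hy' : T.dist r y' + 1 = T.dist r x) : y = y' := by
  classical
  obtain ⟨Q, hQ, hQl⟩ := hT.isConnected.exists_path_of_dist r y
  obtain ⟨Q', hQ', hQl'⟩ := hT.isConnected.exists_path_of_dist r y'
  have hx : x ∉ Q.support := by
    intro hx
    have h1 : T.dist r x ≤ (Q.takeUntil x hx).length := SimpleGraph.dist_le _
    have h2 := Walk.length_takeUntil_le Q hx
    omega
  have hx' : x ∉ Q'.support := by
    intro hx'
    have h1 : T.dist r x ≤ (Q'.takeUntil x hx').length := SimpleGraph.dist_le _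
    have h2 := Walk.length_takeUntil_le Q' hx'
    omega
  have hp1 : (Walk.cons hxy Q.reverse).IsPath :=
    (hQ.reverse).cons (by rwa [Walk.support_reverse, List.mem_reverse])
  have hp2 : (Walk.cons hxy' Q'.reverse).IsPath :=
    (hQ'.reverse).cons (by rwa [Walk.support_reverse, List.mem_reverse])
  have heq := hT.IsAcyclic.path_unique ⟨_, hp1⟩ ⟨_, hp2⟩
  rw [Subtype.ext_iff] at heq
  have hsupp := congrArg Walk.support heq
  rw [Walk.support_cons, Walk.support_cons] at hsupp
  have htails : Q.reverse.support = Q'.reverse.support := by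
    injection hsupp
  have h1 := Walk.support_eq_cons Q.reverse
  have h2 := Walk.support_eq_cons Q'.reverse
  rw [h1, h2] at htails
  injection htails

end TreeLemmas
section FoldMachinery

open SimpleGraph
open scoped Classical

variable {V : Type*} {T : SimpleGraph V}

/-- The parent of a vertex in a tree rooted at `r`. -/
noncomputable def treeParent (hT : T.IsTree) (r v : V) : V :=
  if h : v = r then v else (tree_exists_parent hT r h).choose

lemma treeParent_spec (hT : T.IsTree) (r : V) {v : V} (hv : v ≠ r) :
    T.Adj v (treeParent hT r v) ∧ T.dist r (treeParent hT r v) + 1 = T.dist r v := by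
  rw [treeParent, dif_neg hv]
  exact (tree_exists_parent hT r hv).choose_spec

lemma dist_zero_eq (hT : T.IsTree) {r v : V} (h : T.dist r v = 0) : v = r :=
  (hT.isConnected.dist_eq_zero_iff.mp h).symm

lemma treeParent_eq (hT : T.IsTree) (r : V) {x y : V} (hxy : T.Adj x y)
    (hl : T.dist r x + 1 = T.dist r y) : treeParent hT r y = x := by
  have hy : y ≠ r := by
    intro h
    rw [h, SimpleGraph.dist_self] at hl
    omega
  obtain ⟨ha, hd⟩ := treeParent_spec hT r hy
  exact tree_parent_unique hT r ha hxy.symm hd hl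

variable (i : Fin 2 → V)

/-- The parity of a vertex w.r.t. the root `i 0`. -/
noncomputable def parf (T : SimpleGraph V) (i : Fin 2 → V) (v : V) : Fin 2 :=
  ⟨T.dist (i 0) v % 2, Nat.mod_lt _ (by norm_num)⟩

/-- The "double fold" map: move two steps towards the root edge. -/
noncomputable def ufun (hT : T.IsTree) (v : V) : V :=
  if 2 ≤ T.dist (i 0) v then treeParent hT (i 0) (treeParent hT (i 0) v)
  else i (parf T i v)

/-- The truncated double-fold map: apply `ufun` only at distance `≥ t`. -/
noncomputable def taufun (hT : T.IsTree) (t : ℕ) (v : V) : V :=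
  if t ≤ T.dist (i 0) v then ufun i hT v else v

variable {i}

section WithEdge

variable (hT : T.IsTree) (h01 : T.Adj (i 0) (i 1))

include hT h01

lemma dist_i1 : T.dist (i 0) (i 1) = 1 :=
  SimpleGraph.dist_eq_one_iff_adj.mpr h01

lemma parf_i0 : parf T i (i 0) = 0 := by
  have : T.dist (i 0) (i 0) = 0 := SimpleGraph.dist_self
  simp [parf, this]

lemma parf_i1 : parf T i (i 1) = 1 := by
  simp [parf, dist_i1 hT h01]

omit h01 in
lemma ufun_small {v : V} (h : T.dist (i 0) v ≤ 1) : ufun i hT v = i (parf T i v) := by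
  rw [ufun, if_neg (by omega)]

omit h01 in
/-- distance facts for `ufun` at distance `≥ 2`. -/
lemma ufun_big {v : V} (h : 2 ≤ T.dist (i 0) v) :
    T.dist (i 0) (ufun i hT v) + 2 = T.dist (i 0) v ∧
      T.Adj (treeParent hT (i 0) v) (ufun i hT v) ∧
      T.dist (i 0) (treeParent hT (i 0) v) + 1 = T.dist (i 0) v := by
  have hv0 : v ≠ i 0 := by
    intro he
    rw [he, SimpleGraph.dist_self] at h
    omega
  obtain ⟨ha1, hd1⟩ := treeParent_spec hT (i 0) hv0
  have hp0 : treeParent hT (i 0) v ≠ i 0 := by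
    intro he
    rw [he, SimpleGraph.dist_self] at hd1
    omega
  obtain ⟨ha2, hd2⟩ := treeParent_spec hT (i 0) hp0
  rw [ufun, if_pos h]
  exact ⟨by omega, ha2, hd1⟩

lemma parf_ufun (v : V) : parf T i (ufun i hT v) = parf T i v := by
  by_cases h : 2 ≤ T.dist (i 0) v
  · have := (ufun_big hT h).1
    apply Fin.ext
    simp only [parf]
    omega
  · rw [ufun_small hT (by omega)]
    have h2 : T.dist (i 0) v = 0 ∨ T.dist (i 0) v = 1 := by omega
    rcases h2 with h2 | h2
    · have : parf T i v = 0 := by simp [parf, h2]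
      rw [this, parf_i0 hT h01]
    · have : parf T i v = 1 := by simp [parf, h2]
      rw [this, parf_i1 hT h01]

/-- C2: a vertex is adjacent to the double-fold of a farther neighbour. -/
lemma adj_ufun_right {x y : V} (hxy : T.Adj x y)
    (hl : T.dist (i 0) y = T.dist (i 0) x + 1) : T.Adj x (ufun i hT y) := by
  by_cases h2 : 2 ≤ T.dist (i 0) y
  · obtain ⟨_, ha, _⟩ := ufun_big hT h2
    have hpy : treeParent hT (i 0) y = x := treeParent_eq hT (i 0) hxy (by omega)
    rw [← hpy]
    exact ha
  · have hy1 : T.dist (i 0) y = 1 := by omega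
    have hx0 : x = i 0 := dist_zero_eq hT (by omega)
    rw [ufun_small hT (by omega)]
    have : parf T i y = 1 := by simp [parf, hy1]
    rw [this, hx0]
    exact h01

/-- C3: the double-fold is a graph homomorphism along an edge going away from the root. -/
lemma adj_ufun_both {x y : V} (hxy : T.Adj x y)
    (hl : T.dist (i 0) y = T.dist (i 0) x + 1) :
    T.Adj (ufun i hT x) (ufun i hT y) := by
  by_cases h2 : 2 ≤ T.dist (i 0) x
  · -- ufun y = treeParent x, ufun x = treeParent (treeParent x)
    obtain ⟨_, hay, _⟩ := ufun_big (i := i) hT (v := y) (by omega)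
    have hpy : treeParent hT (i 0) y = x := treeParent_eq hT (i 0) hxy (by omega)
    obtain ⟨_, hax, hdx⟩ := ufun_big (i := i) hT (v := x) h2
    -- hay : Adj (treeParent y) (ufun y), i.e. Adj x (ufun y)... careful
    rw [hpy] at hay
    -- hay : T.Adj x (ufun i hT y)?? no: hay : Adj (treeParent y) (ufun y) → Adj x (ufun y)
    -- we need Adj (ufun x) (ufun y): ufun y = treeParent x.
    have huy : ufun i hT y = treeParent hT (i 0) x := by
      rw [ufun, if_pos (by omega : 2 ≤ T.dist (i 0) y), hpy]
    rw [huy]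
    exact hax.symm
  · rcases (by omega : T.dist (i 0) x = 0 ∨ T.dist (i 0) x = 1) with h0 | h1
    · have hx0 : x = i 0 := dist_zero_eq hT h0
      rw [ufun_small hT (by omega), ufun_small hT (by omega)]
      have hpx : parf T i x = 0 := by simp [parf, h0]
      have hpy : parf T i y = 1 := by simp [parf, h0 ▸ hl]
      rw [hpx, hpy]
      exact h01
    · have hy2 : T.dist (i 0) y = 2 := by omega
      rw [ufun_small hT (by omega)]
      have hpx : parf T i x = 1 := by simp [parf, h1]
      rw [hpx]
      have hpy : treeParent hT (i 0) y = x := treeParent_eq hT (i 0) hxy (by omega)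
      
      have huy : ufun i hT y = treeParent hT (i 0) x := by
        rw [ufun, if_pos (by omega : 2 ≤ T.dist (i 0) y), hpy]
      have hx0 : x ≠ i 0 := by
        intro he
        rw [he, SimpleGraph.dist_self] at h1
        omega
      obtain ⟨_, hd⟩ := treeParent_spec hT (i 0) hx0
      have : treeParent hT (i 0) x = i 0 := dist_zero_eq hT (by omega)
      rw [huy, this]
      exact h01.symm

/-- oriented master lemma -/
lemma adj_taufun_aux {a b : ℕ} (hba : b ≤ a + 1) {x y : V} (hxy : T.Adj x y)
    (hl : T.dist (i 0) y = T.dist (i 0) x + 1) :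
    T.Adj (taufun i hT a x) (taufun i hT b y) := by
  rw [taufun, taufun]
  by_cases ha : a ≤ T.dist (i 0) x
  · rw [if_pos ha, if_pos (by omega : b ≤ T.dist (i 0) y)]
    exact adj_ufun_both hT h01 hxy hl
  · rw [if_neg ha]
    by_cases hb : b ≤ T.dist (i 0) y
    · rw [if_pos hb]
      exact adj_ufun_right hT h01 hxy hl
    · rw [if_neg hb]
      exact hxy

/-- Master lemma: truncated double-folds at adjacent truncation levels map edges to edges. -/
lemma adj_taufun {a b : ℕ} (hba : b ≤ a + 1) (hab : a ≤ b + 1) {x y : V} (hxy : T.Adj x y) :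
    T.Adj (taufun i hT a x) (taufun i hT b y) := by
  rcases tree_adj_dist_or hT (i 0) hxy with hl | hl
  · exact adj_taufun_aux hT h01 hba hxy hl
  · exact (adj_taufun_aux hT h01 hab hxy.symm hl).symm

/-- Iterating the double fold sends everything into the root edge. -/
lemma ufun_iter (m : ℕ) : ∀ v : V, T.dist (i 0) v ≤ m + 1 →
    (ufun i hT)^[m + 1] v = i (parf T i v) := by
  induction m with
  | zero =>
    intro v hv
    rw [Function.iterate_one]
    exact ufun_small hT hv
  | succ m ih =>
    intro v hv
    rw [Function.iterate_succ_apply]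
    by_cases h2 : 2 ≤ T.dist (i 0) v
    · rw [ih (ufun i hT v) (by have := (ufun_big hT h2).1; omega)]
      rw [parf_ufun hT h01]
    · have hsm : T.dist (i 0) v ≤ 1 := by omega
      rw [ih (ufun i hT v) ?_, parf_ufun hT h01]
      rw [ufun_small hT hsm]
      rcases (by omega : T.dist (i 0) v = 0 ∨ T.dist (i 0) v = 1) with hd | hd
      · have hp : parf T i v = 0 := by simp [parf, hd]
        rw [hp]
        have h0 : T.dist (i 0) (i 0) = 0 := SimpleGraph.dist_self
        omega
      · have hp : parf T i v = 1 := by simp [parf, hd]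
        rw [hp, dist_i1 hT h01]
        omega

end WithEdge

end FoldMachinery
section HomMaps

open SimpleGraph

variable {V : Type*} {T : SimpleGraph V} {i : Fin 2 → V}

lemma taufun_zero (hT : T.IsTree) (v : V) : taufun i hT 0 v = ufun i hT v :=
  if_pos (Nat.zero_le _)

lemma adj_ufun_hom (hT : T.IsTree) (h01 : T.Adj (i 0) (i 1)) {x y : V} (hxy : T.Adj x y) :
    T.Adj (ufun i hT x) (ufun i hT y) := by
  have h := adj_taufun (a := 0) (b := 0) hT h01 (by omega) (by omega) hxy
  rwa [taufun_zero, taufun_zero] at h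

lemma adj_ufun_iter (hT : T.IsTree) (h01 : T.Adj (i 0) (i 1)) (k : ℕ) {x y : V}
    (hxy : T.Adj x y) : T.Adj ((ufun i hT)^[k] x) ((ufun i hT)^[k] y) := by
  induction k with
  | zero => exact hxy
  | succ k ih =>
    rw [Function.iterate_succ_apply', Function.iterate_succ_apply']
    exact adj_ufun_hom hT h01 ih

/-- The truncated double-fold as a cell map on `Hom(T, K_n)`. -/
noncomputable def Amap (hT : T.IsTree) (h01 : T.Adj (i 0) (i 1)) (n t : ℕ) :
    HomCell T.Adj (⊤ : SimpleGraph (Fin n)).Adj →o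
      HomCell T.Adj (⊤ : SimpleGraph (Fin n)).Adj :=
  HomCell.pull (taufun i hT t) (fun _ _ hxy => adj_taufun hT h01 (by omega) (by omega) hxy)

/-- The union of two consecutive truncated double-folds as a cell map. -/
noncomputable def Mmap (hT : T.IsTree) (h01 : T.Adj (i 0) (i 1)) (n t : ℕ) :
    HomCell T.Adj (⊤ : SimpleGraph (Fin n)).Adj →o
      HomCell T.Adj (⊤ : SimpleGraph (Fin n)).Adj where
  toFun c :=
    { η := fun v => c.η (taufun i hT (t + 1) v) ∪ c.η (taufun i hT t v)
      nonempty := fun v => (c.nonempty (taufun i hT (t + 1) v)).mono Set.subset_union_left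
      adj := by
        intro x y hxy a ha b hb
        rcases (Set.mem_union _ _ _).mp ha with ha' | ha' <;> rcases (Set.mem_union _ _ _).mp hb with hb' | hb'
        · exact c.adj (adj_taufun (a := t+1) (b := t+1) hT h01 (by omega) (by omega) hxy)
            a ha' b hb'
        · exact c.adj (adj_taufun (a := t+1) (b := t) hT h01 (by omega) (by omega) hxy)
            a ha' b hb'
        · exact c.adj (adj_taufun (a := t) (b := t+1) hT h01 (by omega) (by omega) hxy)
            a ha' b hb'
        · exact c.adj (adj_taufun (a := t) (b := t) hT h01 (by omega) (by omega) hxy)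
            a ha' b hb' }
  monotone' := fun c d h v => Set.union_subset_union (h _) (h _)

/-- Iterated double-fold as a cell map. -/
noncomputable def pullPow (hT : T.IsTree) (h01 : T.Adj (i 0) (i 1)) (n k : ℕ) :
    HomCell T.Adj (⊤ : SimpleGraph (Fin n)).Adj →o
      HomCell T.Adj (⊤ : SimpleGraph (Fin n)).Adj :=
  HomCell.pull ((ufun i hT)^[k]) (fun _ _ hxy => adj_ufun_iter hT h01 k hxy)

lemma pullPow_zero (hT : T.IsTree) (h01 : T.Adj (i 0) (i 1)) (n : ℕ) :
    pullPow hT h01 n 0 = OrderHom.id := by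
  apply OrderHom.ext; funext c
  apply HomCell.eta_injective; funext v
  show c.η ((ufun i hT)^[0] v) = c.η v
  rw [Function.iterate_zero_apply]

lemma pullPow_succ (hT : T.IsTree) (h01 : T.Adj (i 0) (i 1)) (n k : ℕ) :
    pullPow hT h01 n (k + 1) = (pullPow hT h01 n 1).comp (pullPow hT h01 n k) := by
  apply OrderHom.ext; funext c
  apply HomCell.eta_injective; funext v
  show c.η ((ufun i hT)^[k+1] v) = c.η ((ufun i hT)^[k] ((ufun i hT)^[1] v))
  rw [Function.iterate_one, Function.iterate_succ_apply]

lemma Amap_zero (hT : T.IsTree) (h01 : T.Adj (i 0) (i 1)) (n : ℕ) :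
    Amap hT h01 n 0 = pullPow hT h01 n 1 := by
  apply OrderHom.ext; funext c
  apply HomCell.eta_injective; funext v
  show c.η (taufun i hT 0 v) = c.η ((ufun i hT)^[1] v)
  rw [taufun_zero, Function.iterate_one]

end HomMaps
/-- **Babson–Kozlov**: if `T` is a tree with at least one edge, then any inclusion
`i : K₂ ↪ T` of an edge induces a homotopy equivalence
`Hom(T, K_n) → Hom(K₂, K_n)`. -/
theorem tree_homotopyEquiv_homK2 {V : Type*} [Fintype V] (T : SimpleGraph V)
    (hT : T.IsTree) (n : ℕ) (i : Fin 2 → V)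
    (hi : ∀ ⦃x y : Fin 2⦄, (⊤ : SimpleGraph (Fin 2)).Adj x y → T.Adj (i x) (i y)) :
    ∃ e : ContinuousMap.HomotopyEquiv (HomComplex T.Adj (⊤ : SimpleGraph (Fin n)).Adj)
        (HomComplex (⊤ : SimpleGraph (Fin 2)).Adj (⊤ : SimpleGraph (Fin n)).Adj),
      ⇑e.toFun = ⇑(HomCell.pull (B := (⊤ : SimpleGraph (Fin n)).Adj) i hi).realize := by
  classical
  have h01 : T.Adj (i 0) (i 1) := hi (by simp [SimpleGraph.top_adj])
  set N := Fintype.card V with hN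
  have hNpos : 0 < N := Fintype.card_pos_iff.mpr ⟨i 0⟩
  have hdistlt : ∀ v, T.dist (i 0) v < N := by
    intro v
    obtain ⟨p, hp, hl⟩ := hT.isConnected.exists_path_of_dist (i 0) v
    rw [← hl]
    exact hp.length_lt
  -- A N = id
  have hAN : Amap hT h01 n N = OrderHom.id := by
    apply OrderHom.ext; funext c
    apply HomCell.eta_injective; funext v
    show c.η (taufun i hT N v) = c.η v
    rw [taufun, if_neg (by have := hdistlt v; omega)]
  -- zigzag of comparable maps
  have hzig : ∀ k,
      ((Amap hT h01 n (N - k)).realize).Homotopic ((Amap hT h01 n N).realize) := by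
    intro k
    induction k with
    | zero => simpa using ContinuousMap.Homotopic.refl _
    | succ k ih =>
      by_cases hk : N ≤ k
      · rw [(by omega : N - (k + 1) = N - k)]
        exact ih
      · have hsucc : N - (k + 1) + 1 = N - k := by omega
        have hle1 : ∀ c, Amap hT h01 n (N - (k + 1)) c ≤ Mmap hT h01 n (N - (k + 1)) c :=
          fun c => HomCell.le_def.mpr fun v => Set.subset_union_right
        have hle2 : ∀ c,
            Amap hT h01 n (N - (k + 1) + 1) c ≤ Mmap hT h01 n (N - (k + 1)) c :=
          fun c => HomCell.le_def.mpr fun v => Set.subset_union_left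
        refine ((realize_homotopic _ _ hle1).trans
          ((realize_homotopic _ _ hle2).symm)).trans ?_
        rw [hsucc]
        exact ih
  have hA0 : ((Amap hT h01 n 0).realize).Homotopic
      (ContinuousMap.id (OrderComplex (HomCell T.Adj (⊤ : SimpleGraph (Fin n)).Adj))) := by
    have h := hzig N
    rw [Nat.sub_self, hAN, realize_id] at h
    exact h
  -- powers of the double fold are homotopic to the identity
  have hPow : ∀ k, ((pullPow hT h01 n k).realize).Homotopic
      (ContinuousMap.id (OrderComplex (HomCell T.Adj (⊤ : SimpleGraph (Fin n)).Adj))) := by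
    intro k
    induction k with
    | zero =>
      rw [pullPow_zero, realize_id]
    | succ k ih =>
      rw [pullPow_succ, realize_comp]
      have h1 : ((pullPow hT h01 n 1).realize).Homotopic
          (ContinuousMap.id (OrderComplex (HomCell T.Adj (⊤ : SimpleGraph (Fin n)).Adj))) := by
        rw [← Amap_zero]
        exact hA0
      have h2 := ContinuousMap.Homotopic.comp h1 ih
      rwa [ContinuousMap.id_comp] at h2
  -- the parity section
  have hparadj : ∀ ⦃x y : V⦄, T.Adj x y →
      (⊤ : SimpleGraph (Fin 2)).Adj (parf T i x) (parf T i y) := by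
    intro x y hxy
    rw [SimpleGraph.top_adj]
    intro he
    simp only [parf, Fin.mk.injEq] at he
    rcases tree_adj_dist_or hT (i 0) hxy with h | h <;> omega
  set s : HomCell (⊤ : SimpleGraph (Fin 2)).Adj (⊤ : SimpleGraph (Fin n)).Adj →o
      HomCell T.Adj (⊤ : SimpleGraph (Fin n)).Adj :=
    HomCell.pull (fun v => parf T i v) hparadj with hs
  -- s ∘ pull i = pullPow N
  have hcomp1 : s.comp (HomCell.pull (B := (⊤ : SimpleGraph (Fin n)).Adj) i hi)
      = pullPow hT h01 n N := by
    apply OrderHom.ext; funext c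
    apply HomCell.eta_injective; funext v
    show c.η (i (parf T i v)) = c.η ((ufun i hT)^[N] v)
    obtain ⟨m, hm⟩ : ∃ m, N = m + 1 := ⟨N - 1, by omega⟩
    rw [hm, ufun_iter hT h01 m v (by have := hdistlt v; omega)]
  -- pull i ∘ s = id
  have hcomp2 : (HomCell.pull (B := (⊤ : SimpleGraph (Fin n)).Adj) i hi).comp s
      = OrderHom.id := by
    apply OrderHom.ext; funext d
    apply HomCell.eta_injective; funext w
    show d.η (parf T i (i w)) = d.η w
    have hpi : ∀ w : Fin 2, parf T i (i w) = w := by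
      rw [Fin.forall_fin_two]
      exact ⟨parf_i0 hT h01, parf_i1 hT h01⟩
    rw [hpi]
  refine ⟨⟨(HomCell.pull (B := (⊤ : SimpleGraph (Fin n)).Adj) i hi).realize, s.realize,
    ?_, ?_⟩, rfl⟩
  · show ContinuousMap.Homotopic (s.realize.comp (HomCell.pull (B := (⊤ : SimpleGraph (Fin n)).Adj) i hi).realize) (ContinuousMap.id (OrderComplex (HomCell T.Adj (⊤ : SimpleGraph (Fin n)).Adj)))
    rw [← realize_comp, hcomp1]
    exact hPow N
  · show ContinuousMap.Homotopic ((HomCell.pull (B := (⊤ : SimpleGraph (Fin n)).Adj) i hi).realize.comp s.realize) (ContinuousMap.id (OrderComplex (HomCell (⊤ : SimpleGraph (Fin 2)).Adj (⊤ : SimpleGraph (Fin n)).Adj)))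
    rw [← realize_comp, hcomp2, realize_id]
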